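/- For any covering map p : X̃ → X and x ∈ X, every element of the SG subgroup π₁ˢᵍ(X,x) acts trivially on the fiber p⁻¹(x) under the monodromy action of π₁(X,x). -/

import Mathlib

open CategoryTheory Topology

attribute [local instance] Path.Homotopic.setoid

noncomputable section

variable {X Y E : Type*} [TopologicalSpace X] [TopologicalSpace Y] [TopologicalSpace E]

/-- Build an element of the fundamental group from a homotopy class of loops. -/
def fromLoop {x : X} (p : Path.Homotopic.Quotient x x) : FundamentalGroup X x :=
  FundamentalGroup.fromPath p

/-- The homotopy class of loops underlying an element of the fundamental group. -/
def toLoop {x : X} (γ : FundamentalGroup X x) : Path.Homotopic.Quotient x x :=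
  FundamentalGroup.toPath γ

/-- A fundamental group element is *small* if it has a loop representative inside every
neighborhood of the basepoint. -/
def IsSmall {x : X} (γ : FundamentalGroup X x) : Prop :=
  ∀ U ∈ nhds x, ∃ δ : Path x x, (∀ t, δ t ∈ U) ∧ fromLoop ⟦δ⟧ = γ

/-- The set of small loop classes, i.e. the carrier of the small loop group `π₁ˢ(X,x)`. -/
def smallSet (X : Type*) [TopologicalSpace X] (x : X) : Set (FundamentalGroup X x) :=
  {γ | IsSmall γ}

/-- Conjugate of a loop class at `y` by a path `α` from `x` to `y`: `α * β * α⁻¹`. -/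
def conjPath {x y : X} (α : Path x y) (β : FundamentalGroup X y) : FundamentalGroup X x :=
  fromLoop (Path.Homotopic.Quotient.trans
    (Path.Homotopic.Quotient.trans (⟦α⟧ : Path.Homotopic.Quotient x y) (toLoop β))
    (⟦α.symm⟧ : Path.Homotopic.Quotient y x))

/-- The SG subgroup `π₁ˢᵍ(X,x)`: generated by conjugates of small loop classes. -/
def sgSubgroup (X : Type*) [TopologicalSpace X] (x : X) : Subgroup (FundamentalGroup X x) :=
  Subgroup.closure {g | ∃ (y : X) (α : Path x y) (β : FundamentalGroup X y), IsSmall β ∧ g = conjPath α β}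

/-- The map induced on fundamental groups by a continuous map. -/
def piMap (f : C(X, Y)) (x : X) (γ : FundamentalGroup X x) : FundamentalGroup Y (f x) :=
  fromLoop (Path.Homotopic.Quotient.map (toLoop γ) f)

/-- A small loop space: a path-connected, non-simply connected space all of whose loops
are small. -/
def IsSmallLoopSpace (X : Type*) [TopologicalSpace X] : Prop :=
  PathConnectedSpace X ∧ ¬ SimplyConnectedSpace X ∧
    ∀ (x : X) (γ : FundamentalGroup X x), IsSmall γ

/-- A space is homotopically Hausdorff if every nontrivial loop class can be kept away from
some neighborhood of its basepoint. -/
def HomotopicallyHausdorff (X : Type*) [TopologicalSpace X] : Prop :=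
  ∀ (x : X) (γ : FundamentalGroup X x), γ ≠ 1 →
    ∃ U ∈ nhds x, ∀ δ : Path x x, (∀ t, δ t ∈ U) → fromLoop ⟦δ⟧ ≠ γ

/-- The image of `π₁(U,y) → π₁(X,y)`: classes of loops having a representative inside `U`. -/
def loopsIn (U : Set X) (y : X) : Set (FundamentalGroup X y) :=
  {γ | ∃ δ : Path y y, (∀ t, δ t ∈ U) ∧ fromLoop ⟦δ⟧ = γ}

/-- A semi-locally small loop space. -/
def SemiLocallySmallLoop (X : Type*) [TopologicalSpace X] : Prop :=
  ∀ x : X, ∃ U : Set X, IsOpen U ∧ x ∈ U ∧ ∀ y ∈ U, loopsIn U y = smallSet X y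



section CoveringLift
open Set Metric


variable {E X : Type*} [TopologicalSpace E] [TopologicalSpace X] {p : C(E, X)}

/-- A trivialization around the image of a point. -/
def covTriv (hp : IsCoveringMap p) (e : E) : Bundle.Trivialization (p ⁻¹' {p e}) ⇑p :=
  haveI : Nonempty (p ⁻¹' {p e}) := ⟨⟨e, rfl⟩⟩
  (hp (p e)).toTrivialization

lemma covTriv_mem (hp : IsCoveringMap p) (e : E) {y : X} (h : p e = y) :
    y ∈ (covTriv hp e).baseSet := by
  subst h
  haveI : Nonempty (p ⁻¹' {p e}) := ⟨⟨e, rfl⟩⟩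
  exact (hp (p e)).mem_toTrivialization_baseSet

/-- The lift inside one sheet of a trivialization. -/
def sheetLift {y : X} (T : Bundle.Trivialization (p ⁻¹' {y}) ⇑p) (u : ℝ → X) (e : E) : ℝ → E :=
  fun t => T.toOpenPartialHomeomorph.symm (u t, (T e).2)

lemma sheetLift_continuous {y : X} (T : Bundle.Trivialization (p ⁻¹' {y}) ⇑p) {u : ℝ → X} (e : E)
    (hu : Continuous u) (hmem : ∀ t, u t ∈ T.baseSet) : Continuous (sheetLift T u e) :=
  T.toOpenPartialHomeomorph.continuousOn_symm.comp_continuous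
    (hu.prodMk continuous_const) (fun t => T.mem_target.2 (hmem t))

lemma sheetLift_proj {y : X} (T : Bundle.Trivialization (p ⁻¹' {y}) ⇑p) {u : ℝ → X} (e : E)
    (hmem : ∀ t, u t ∈ T.baseSet) (t : ℝ) : p (sheetLift T u e t) = u t :=
  T.proj_symm_apply (T.mem_target.2 (hmem t))

lemma sheetLift_eq {y : X} (T : Bundle.Trivialization (p ⁻¹' {y}) ⇑p) {u : ℝ → X} {e : E}
    {t : ℝ} (hpe : p e = u t) (hmem : u t ∈ T.baseSet) : sheetLift T u e t = e := by
  have hsrc : e ∈ T.source := T.mem_source.2 (by rw [hpe]; exact hmem)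
  have : (u t, (T e).2) = T e := by rw [← hpe]; exact T.mk_proj_snd' (by rw [hpe]; exact hmem)
  rw [sheetLift, this]
  exact T.toOpenPartialHomeomorph.left_inv hsrc

/-- clamp to an interval -/
def clampI (a b t : ℝ) : ℝ := max a (min t b)

lemma clampI_continuous (a b : ℝ) : Continuous (clampI a b) :=
  continuous_const.max ((continuous_id.min continuous_const))

lemma clampI_mem (a b t : ℝ) (hab : a ≤ b) : clampI a b t ∈ Icc a b :=
  ⟨le_max_left _ _, max_le hab (min_le_right _ _)⟩

lemma clampI_of_mem {a b t : ℝ} (ht : t ∈ Icc a b) : clampI a b t = t := by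
  rw [clampI, min_eq_left ht.2, max_eq_right ht.1]

/-- Existence of path lifts for covering maps. -/
theorem IsCoveringMap.exists_lift (hp : IsCoveringMap p) (σ : C(ℝ, X)) (e₀ : E)
    (he : p e₀ = σ 0) :
    ∃ f : ℝ → E, Continuous f ∧ f 0 = e₀ ∧ ∀ t ∈ Icc (0:ℝ) 1, p (f t) = σ t := by
  obtain ⟨Γ, hΓp, hΓ0⟩ := hp.exists_path_lifts (σ.comp ⟨Subtype.val, continuous_subtype_val⟩) e₀
    (by simp [he])
  refine ⟨fun t => Γ (projIcc 0 1 zero_le_one t), Γ.continuous.comp continuous_projIcc, ?_, ?_⟩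
  · show Γ (projIcc 0 1 zero_le_one 0) = e₀
    rw [projIcc_left]; exact hΓ0
  · intro t ht
    show p (Γ (projIcc 0 1 zero_le_one t)) = σ t
    have := congr_fun hΓp (projIcc 0 1 zero_le_one t)
    simp only [Function.comp_apply, ContinuousMap.comp_apply, ContinuousMap.coe_mk] at this
    rw [this, projIcc_of_mem _ ht]

theorem IsCoveringMap.lift_eqOn (hp : IsCoveringMap p) {f g : ℝ → E} {a b : ℝ} (hab : a ≤ b)
    (hf : ContinuousOn f (Icc a b)) (hg : ContinuousOn g (Icc a b))
    (h : EqOn (⇑p ∘ f) (⇑p ∘ g) (Icc a b)) (hfg : f a = g a) : EqOn f g (Icc a b) :=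
  hp.eqOn_of_comp_eqOn isPreconnected_Icc hf hg h (left_mem_Icc.2 hab) hfg

theorem IsCoveringMap.homotopy_endpoint (hp : IsCoveringMap p) {x : X} {σ τ : Path x x}
    (h : σ.Homotopic τ) {f g : ℝ → E} (hf : Continuous f) (hg : Continuous g)
    (hpf : ∀ t ∈ Icc (0:ℝ) 1, p (f t) = σ.extend t)
    (hpg : ∀ t ∈ Icc (0:ℝ) 1, p (g t) = τ.extend t)
    (h0 : f 0 = g 0) : f 1 = g 1 := by
  obtain ⟨H⟩ := h
  set pr : ℝ → unitInterval := projIcc 0 1 zero_le_one with hpr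
  have hprc : Continuous pr := continuous_projIcc
  set Q : ℝ → ℝ → X := fun s t => H (pr s, pr t) with hQ
  have hQc : Continuous fun z : ℝ × ℝ => Q z.1 z.2 :=
    H.continuous.comp ((hprc.comp continuous_fst).prodMk (hprc.comp continuous_snd))
  have hQcol : ∀ s, Continuous fun t => Q s t := fun s =>
    hQc.comp (continuous_const.prodMk continuous_id)
  have hpr0 : pr 0 = 0 := projIcc_left _
  have hpr1 : pr 1 = 1 := projIcc_right _
  have hQ0 : ∀ s, Q s 0 = x := fun s => by
    show H (pr s, pr 0) = x
    rw [hpr0]; exact H.source (pr s)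
  have hQ1 : ∀ s, Q s 1 = x := fun s => by
    show H (pr s, pr 1) = x
    rw [hpr1]; exact H.target (pr s)
  have hQleft : ∀ t, Q 0 t = σ.extend t := fun t => by
    show H (pr 0, pr t) = σ.extend t
    rw [hpr0]
    exact H.apply_zero (pr t)
  have hQright : ∀ t, Q 1 t = τ.extend t := fun t => by
    show H (pr 1, pr t) = τ.extend t
    rw [hpr1]
    exact H.apply_one (pr t)
  have h01 : (0:ℝ) ∈ Icc (0:ℝ) 1 := by norm_num
  have h11 : (1:ℝ) ∈ Icc (0:ℝ) 1 := by norm_num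
  have he0 : p (f 0) = x := by rw [hpf 0 h01, Path.extend_zero]
  have hcol : ∀ s : ℝ, ∃ ℓ : ℝ → E, Continuous ℓ ∧ ℓ 0 = f 0 ∧
      ∀ t ∈ Icc (0:ℝ) 1, p (ℓ t) = Q s t := fun s =>
    hp.exists_lift ⟨fun t => Q s t, hQcol s⟩ (f 0) (by rw [he0, ContinuousMap.coe_mk, hQ0 s])
  choose ℓ hℓc hℓ0 hℓp using hcol
  set v : ℝ → E := fun s => ℓ s 1 with hv
  have hvp : ∀ s, p (v s) = x := fun s => by rw [hv]; rw [hℓp s 1 h11, hQ1]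
  have loc : ∀ s₀ ∈ Icc (0:ℝ) 1, ∃ ε > 0, ∀ s ∈ ball s₀ ε, v s = v s₀ := by
    intro s₀ hs₀
    obtain ⟨δ, hδ, hball⟩ := lebesgue_number_lemma_of_metric
      ((isCompact_Icc (a := (0:ℝ)) (b := 1)).prod (isCompact_Icc (a := (0:ℝ)) (b := 1)))
      (fun y : E => (covTriv hp y).open_baseSet.preimage hQc)
      (fun z hz => Set.mem_iUnion.2 ⟨ℓ z.1 z.2, covTriv_mem hp _ (hℓp z.1 z.2 hz.2)⟩)
    obtain ⟨n, hn⟩ := exists_nat_one_div_lt hδ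
    set N : ℕ := n + 1 with hN
    have hNpos : (0:ℝ) < N := by positivity
    have hinv : 1 / (N:ℝ) < δ := by exact_mod_cast hn
    set B : Set ℝ := ball s₀ δ with hB
    have key : ∀ k : ℕ, k ≤ N → ∃ w : ℝ → E, ContinuousOn w B ∧
        ∀ s ∈ B, ℓ s (k / N) = w s := by
      intro k hk
      induction k with
      | zero =>
        refine ⟨fun _ => f 0, continuousOn_const, fun s _ => ?_⟩
        simp only [Nat.cast_zero, zero_div]
        exact hℓ0 s
      | succ k ih =>
        obtain ⟨w, hwc, hws⟩ := ih (le_of_lt (Nat.lt_of_succ_le hk))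
        set a : ℝ := k / N with ha
        set b : ℝ := (k + 1 : ℕ) / N with hb
        have hab : a ≤ b := by rw [ha, hb]; gcongr; exact_mod_cast Nat.le_succ k
        have ha01 : a ∈ Icc (0:ℝ) 1 := by
          constructor
          · positivity
          · rw [ha, div_le_one hNpos]
            exact_mod_cast le_of_lt (Nat.lt_of_succ_le hk)
        have hb01 : b ∈ Icc (0:ℝ) 1 := by
          constructor
          · positivity
          · rw [hb, div_le_one hNpos]
            exact_mod_cast hk
        obtain ⟨y, hy⟩ := hball (s₀, a) (Set.mk_mem_prod hs₀ ha01)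
        set T := covTriv hp y with hT
        have hrect : ∀ s ∈ B, ∀ t ∈ Icc a b, Q s t ∈ T.baseSet := by
          intro s hs t ht
          have hm : (s, t) ∈ ball (s₀, a) δ := by
            rw [mem_ball, Prod.dist_eq]
            refine max_lt (mem_ball.1 hs) ?_
            rw [Real.dist_eq, abs_of_nonneg (sub_nonneg.2 ht.1)]
            calc t - a ≤ b - a := by linarith [ht.2]
            _ = 1 / N := by rw [ha, hb, div_sub_div_same]; push_cast; ring
            _ < δ := hinv
          exact hy hm
        have hIccsub : Icc a b ⊆ Icc (0:ℝ) 1 := Icc_subset_Icc ha01.1 hb01.2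
        have hpw : ∀ s ∈ B, p (w s) = Q s a := by
          intro s hs
          rw [← hws s hs]
          exact hℓp s a ha01
        have hwsrc : ∀ s ∈ B, w s ∈ T.source := by
          intro s hs
          exact T.mem_source.2 (by rw [hpw s hs]; exact hrect s hs a (left_mem_Icc.2 hab))
        have hstep : ∀ s ∈ B, ℓ s b =
            T.toOpenPartialHomeomorph.symm (Q s b, (T (w s)).2) := by
          intro s hs
          set u : ℝ → X := fun t => Q s (clampI a b t) with hu
          have humem : ∀ t, u t ∈ T.baseSet := fun t =>
            hrect s hs _ (clampI_mem a b t hab)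
          have hua : u a = Q s a := by
            show Q s (clampI a b a) = Q s a
            rw [clampI_of_mem (left_mem_Icc.2 hab)]
          have hub : u b = Q s b := by
            show Q s (clampI a b b) = Q s b
            rw [clampI_of_mem (right_mem_Icc.2 hab)]
          have hpwu : p (w s) = u a := by rw [hua]; exact hpw s hs
          have heq : EqOn (ℓ s) (sheetLift T u (w s)) (Icc a b) := by
            refine hp.lift_eqOn hab (hℓc s).continuousOn
              (sheetLift_continuous T (w s)
                ((hQcol s).comp (clampI_continuous a b)) humem).continuousOn ?_ ?_
            · intro t ht
              show p (ℓ s t) = p (sheetLift T u (w s) t)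
              rw [hℓp s t (hIccsub ht), sheetLift_proj T (w s) humem t]
              show Q s t = Q s (clampI a b t)
              rw [clampI_of_mem ht]
            · rw [← hws s hs] at hpwu ⊢
              exact (sheetLift_eq T hpwu (hpwu ▸ humem a)).symm
          have := heq (right_mem_Icc.2 hab)
          rw [this]
          show T.toOpenPartialHomeomorph.symm (u b, _) = _
          rw [hub]
        refine ⟨fun s => T.toOpenPartialHomeomorph.symm (Q s b, (T (w s)).2), ?_, ?_⟩
        · have hTwc : ContinuousOn (fun s => T (w s)) B :=
            ContinuousOn.comp T.toOpenPartialHomeomorph.continuousOn hwc (fun s hs => hwsrc s hs)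
          have hidx : ContinuousOn (fun s => (T (w s)).2) B :=
            continuous_snd.comp_continuousOn hTwc
          have hQb : ContinuousOn (fun s => Q s b) B :=
            (hQc.comp (continuous_id.prodMk continuous_const)).continuousOn
          have hpair : ContinuousOn (fun s => (Q s b, (T (w s)).2)) B := hQb.prodMk hidx
          exact ContinuousOn.comp T.toOpenPartialHomeomorph.continuousOn_symm hpair
            (fun s hs => T.mem_target.2 (hrect s hs b (right_mem_Icc.2 hab)))
        · exact hstep
    obtain ⟨w, hwc, hws⟩ := key N le_rfl
    have hNN : ((N:ℝ) / N) = 1 := div_self (ne_of_gt hNpos)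
    have hvw : ∀ s ∈ B, v s = w s := by
      intro s hs
      rw [hv]
      simp only
      rw [← hNN]
      exact hws s hs
    refine ⟨δ, hδ, fun s hs => ?_⟩
    have hs₀B : s₀ ∈ B := mem_ball_self hδ
    rw [hvw s hs, hvw s₀ hs₀B]
    exact hp.constOn_of_comp (convex_ball s₀ δ).isPreconnected hwc
      (fun u hu u' hu' => by
        rw [show p (w u) = x by rw [← hvw u hu]; exact hvp u,
          show p (w u') = x by rw [← hvw u' hu']; exact hvp u']) hs hs₀B
  have hvc : ContinuousOn v (Icc (0:ℝ) 1) := by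
    intro s hs
    obtain ⟨ε, hε, hloc⟩ := loc s hs
    have : v =ᶠ[nhds s] fun _ => v s :=
      Filter.eventually_of_mem (ball_mem_nhds s hε) hloc
    exact this.continuousAt.continuousWithinAt
  have hv01 : v 0 = v 1 :=
    hp.constOn_of_comp isPreconnected_Icc hvc
      (fun u _ u' _ => by rw [hvp u, hvp u']) h01 h11
  have hf1 : f 1 = v 0 := by
    have heq : EqOn f (ℓ 0) (Icc (0:ℝ) 1) := by
      refine hp.lift_eqOn zero_le_one hf.continuousOn (hℓc 0).continuousOn ?_ (hℓ0 0).symm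
      intro t ht
      show p (f t) = p (ℓ 0 t)
      rw [hpf t ht, hℓp 0 t ht, hQleft]
    exact heq h11
  have hg1 : g 1 = v 1 := by
    have heq : EqOn g (ℓ 1) (Icc (0:ℝ) 1) := by
      refine hp.lift_eqOn zero_le_one hg.continuousOn (hℓc 1).continuousOn ?_ ?_
      · intro t ht
        show p (g t) = p (ℓ 1 t)
        rw [hpg t ht, hℓp 1 t ht, hQright]
      · rw [hℓ0 1, h0]
    exact heq h11
  rw [hf1, hg1, hv01]

theorem IsCoveringMap.lift_trans (hp : IsCoveringMap p) {u v w : X} (P : Path u v)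
    (Q : Path v w) {fP fQ : ℝ → E} (hfPc : Continuous fP) (hfQc : Continuous fQ)
    (hfP : ∀ t ∈ Icc (0:ℝ) 1, p (fP t) = P.extend t)
    (hfQ : ∀ t ∈ Icc (0:ℝ) 1, p (fQ t) = Q.extend t)
    (hend : fP 1 = fQ 0) :
    ∃ f : ℝ → E, Continuous f ∧ f 0 = fP 0 ∧ f 1 = fQ 1 ∧
      ∀ t ∈ Icc (0:ℝ) 1, p (f t) = (P.trans Q).extend t := by
  refine ⟨fun t => if t ≤ 1/2 then fP (2*t) else fQ (2*t - 1), ?_, ?_, ?_, ?_⟩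
  · refine Continuous.if_le
      (hfPc.comp (continuous_const.mul continuous_id))
      (hfQc.comp ((continuous_const.mul continuous_id).sub continuous_const))
      continuous_id continuous_const ?_
    intro t ht
    rw [ht]
    norm_num [hend]
  · norm_num
  · norm_num
  · intro t ht
    rw [Path.extend_apply _ ht, Path.trans_apply]
    by_cases h : t ≤ 1/2
    · have h2t : 2*t ∈ Icc (0:ℝ) 1 := ⟨by linarith [ht.1], by linarith⟩
      simp only [if_pos h]
      rw [hfP (2*t) h2t, Path.extend_apply _ h2t]
      rw [dif_pos (show ((⟨t, ht⟩ : unitInterval) : ℝ) ≤ 1/2 from h)]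
    · have h2t : 2*t - 1 ∈ Icc (0:ℝ) 1 := ⟨by linarith [not_le.1 h], by linarith [ht.2]⟩
      simp only [if_neg h]
      rw [hfQ (2*t - 1) h2t, Path.extend_apply _ h2t]
      rw [dif_neg (show ¬((⟨t, ht⟩ : unitInterval) : ℝ) ≤ 1/2 from h)]

theorem lift_symm {u v : X} (P : Path u v) {f : ℝ → E}
    (hf : ∀ t ∈ Icc (0:ℝ) 1, p (f t) = P.extend t) :
    ∀ t ∈ Icc (0:ℝ) 1, p (f (1 - t)) = P.symm.extend t := by
  intro t ht
  have h1t : 1 - t ∈ Icc (0:ℝ) 1 := ⟨by linarith [ht.2], by linarith [ht.1]⟩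
  rw [hf _ h1t, Path.extend_apply _ h1t, Path.extend_apply _ ht]
  rfl

end CoveringLift
theorem toLoop_fromLoop {x : X} (q : Path.Homotopic.Quotient x x) : toLoop (fromLoop q) = q :=
  rfl

theorem fromLoop_toLoop {x : X} (γ : FundamentalGroup X x) : fromLoop (toLoop γ) = γ :=
  rfl

theorem loop_eq_toLoop {x : X} {γ : FundamentalGroup X x} {σ : Path x x}
    (h : fromLoop ⟦σ⟧ = γ) : (⟦σ⟧ : Path.Homotopic.Quotient x x) = toLoop γ := by
  rw [← h]; rfl

theorem toLoop_mul {x : X} (γ₁ γ₂ : FundamentalGroup X x) :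
    toLoop (γ₁ * γ₂) = (toLoop γ₂).trans (toLoop γ₁) := rfl

theorem toLoop_one {x : X} : toLoop (1 : FundamentalGroup X x) = ⟦Path.refl x⟧ := rfl

theorem toLoop_inv_fromLoop {x : X} (σ : Path x x) :
    toLoop (fromLoop ⟦σ⟧)⁻¹ = ⟦σ.symm⟧ := rfl


section TrivLayer
open Set Metric

variable {E X : Type*} [TopologicalSpace E] [TopologicalSpace X]

/-- The property that `γ` acts trivially on every point of the fiber over `x`. -/
def TrivAction (p : C(E, X)) (x : X) (γ : FundamentalGroup X x) : Prop :=
  ∀ σ : Path x x, (⟦σ⟧ : Path.Homotopic.Quotient x x) = toLoop γ →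
    ∀ e : E, p e = x → ∀ f : ℝ → E, Continuous f →
      (∀ t ∈ Icc (0:ℝ) 1, p (f t) = σ.extend t) → f 0 = e → f 1 = e

theorem trivAction_one {p : C(E, X)} (hp : IsCoveringMap p) (x : X) :
    TrivAction p x 1 := by
  intro σ hσ e he f hf hpf hf0
  have hhom : σ.Homotopic (Path.refl x) := Quotient.exact (hσ.trans toLoop_one)
  have := hp.homotopy_endpoint hhom hf continuous_const hpf
    (fun t _ => by rw [Path.refl_extend]; exact he) hf0
  exact this

theorem trivAction_mul {p : C(E, X)} (hp : IsCoveringMap p) {x : X}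
    {γ₁ γ₂ : FundamentalGroup X x} (h₁ : TrivAction p x γ₁) (h₂ : TrivAction p x γ₂) :
    TrivAction p x (γ₁ * γ₂) := by
  intro σ hσ e he f hf hpf hf0
  set σ₁ : Path x x := Quotient.out (toLoop γ₁) with hσ₁d
  set σ₂ : Path x x := Quotient.out (toLoop γ₂) with hσ₂d
  have hσ₁ : (⟦σ₁⟧ : Path.Homotopic.Quotient x x) = toLoop γ₁ := Quotient.out_eq _
  have hσ₂ : (⟦σ₂⟧ : Path.Homotopic.Quotient x x) = toLoop γ₂ := Quotient.out_eq _
  have hτ : (⟦σ₂.trans σ₁⟧ : Path.Homotopic.Quotient x x) = toLoop (γ₁ * γ₂) := by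
    exact congrArg₂ Path.Homotopic.Quotient.trans hσ₂ hσ₁
  obtain ⟨f₂, hf₂c, hf₂0, hf₂p⟩ := hp.exists_lift ⟨σ₂.extend, σ₂.continuous_extend⟩ e
    (by show p e = σ₂.extend 0; rw [Path.extend_zero]; exact he)
  have hf₂1 : f₂ 1 = e := h₂ σ₂ hσ₂ e he f₂ hf₂c hf₂p hf₂0
  obtain ⟨f₁, hf₁c, hf₁0, hf₁p⟩ := hp.exists_lift ⟨σ₁.extend, σ₁.continuous_extend⟩ e
    (by show p e = σ₁.extend 0; rw [Path.extend_zero]; exact he)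
  have hf₁1 : f₁ 1 = e := h₁ σ₁ hσ₁ e he f₁ hf₁c hf₁p hf₁0
  obtain ⟨F, hFc, hF0, hF1, hFp⟩ := hp.lift_trans σ₂ σ₁ hf₂c hf₁c hf₂p hf₁p
    (by rw [hf₂1, hf₁0])
  have hhom : σ.Homotopic (σ₂.trans σ₁) := Quotient.exact (hσ.trans hτ.symm)
  have := hp.homotopy_endpoint hhom hf hFc hpf hFp (by rw [hf0, hF0, hf₂0])
  rw [this, hF1, hf₁1]

theorem trivAction_inv {p : C(E, X)} (hp : IsCoveringMap p) {x : X}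
    {γ : FundamentalGroup X x} (h : TrivAction p x γ) : TrivAction p x γ⁻¹ := by
  intro σ hσ e he f hf hpf hf0
  have h11 : (1:ℝ) ∈ Icc (0:ℝ) 1 := by norm_num
  have hσ' : (⟦σ.symm⟧ : Path.Homotopic.Quotient x x) = toLoop γ := by
    have h1 : fromLoop ⟦σ⟧ = γ⁻¹ := by rw [hσ]; exact fromLoop_toLoop _
    calc (Path.Homotopic.Quotient.mk σ.symm : Path.Homotopic.Quotient x x)
        = toLoop (fromLoop ⟦σ⟧)⁻¹ := (toLoop_inv_fromLoop σ).symm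
      _ = toLoop (γ⁻¹)⁻¹ := by rw [h1]
      _ = toLoop γ := by rw [inv_inv]
  have he' : p (f 1) = x := by rw [hpf 1 h11, Path.extend_one]
  have hg : ∀ t ∈ Icc (0:ℝ) 1, p (f (1 - t)) = σ.symm.extend t := lift_symm σ hpf
  have := h σ.symm hσ' (f 1) he' (fun t => f (1 - t))
    (hf.comp (continuous_const.sub continuous_id)) hg (by norm_num)
  have h01 : f 0 = f 1 := by simpa using this
  rw [← h01, hf0]

theorem trivAction_gen {p : C(E, X)} (hp : IsCoveringMap p) {x y : X}
    (α : Path x y) (β : FundamentalGroup X y) (hβ : IsSmall β) :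
    TrivAction p x (conjPath α β) := by
  intro σ hσ e he f hf hpf hf0
  have h11 : (1:ℝ) ∈ Icc (0:ℝ) 1 := by norm_num
  obtain ⟨fα, hfαc, hfα0, hfαp⟩ := hp.exists_lift ⟨α.extend, α.continuous_extend⟩ e
    (by show p e = α.extend 0; rw [Path.extend_zero]; exact he)
  have hpe' : p (fα 1) = y := by
    rw [hfαp 1 h11]; show α.extend 1 = y; rw [Path.extend_one]
  set T := covTriv hp (fα 1) with hT
  have hV : T.baseSet ∈ nhds y :=
    T.open_baseSet.mem_nhds (covTriv_mem hp _ hpe')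
  obtain ⟨d, hdmem, hdβ⟩ := hβ T.baseSet hV
  have hdq : (⟦d⟧ : Path.Homotopic.Quotient y y) = toLoop β := loop_eq_toLoop hdβ
  have hτ : (⟦(α.trans d).trans α.symm⟧ : Path.Homotopic.Quotient x x)
      = toLoop (conjPath α β) := by
    exact congrArg (fun q => Path.Homotopic.Quotient.trans (Path.Homotopic.Quotient.trans ⟦α⟧ q) ⟦α.symm⟧) hdq
  have humem : ∀ t, d.extend t ∈ T.baseSet := fun t => hdmem _
  set fd : ℝ → E := sheetLift T d.extend (fα 1) with hfd
  have hfdc : Continuous fd := sheetLift_continuous T (fα 1) d.continuous_extend humem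
  have hfdp : ∀ t ∈ Icc (0:ℝ) 1, p (fd t) = d.extend t :=
    fun t _ => sheetLift_proj T (fα 1) humem t
  have hfd0 : fd 0 = fα 1 :=
    sheetLift_eq T (by rw [Path.extend_zero]; exact hpe') (humem 0)
  have hfd1 : fd 1 = fα 1 :=
    sheetLift_eq T (by rw [Path.extend_one]; exact hpe') (humem 1)
  obtain ⟨F₁, hF₁c, hF₁0, hF₁1, hF₁p⟩ := hp.lift_trans α d hfαc hfdc hfαp hfdp hfd0.symm
  have hfα'p : ∀ t ∈ Icc (0:ℝ) 1, p (fα (1 - t)) = α.symm.extend t := lift_symm α hfαp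
  obtain ⟨F, hFc, hF0, hF1, hFp⟩ := hp.lift_trans (α.trans d) α.symm hF₁c
    (hfαc.comp (continuous_const.sub continuous_id)) hF₁p hfα'p
    (by rw [hF₁1, hfd1]; norm_num)
  have hhom : σ.Homotopic ((α.trans d).trans α.symm) := Quotient.exact (hσ.trans hτ.symm)
  have := hp.homotopy_endpoint hhom hf hFc hpf hFp (by rw [hf0, hF0, hF₁0, hfα0])
  rw [this, hF1]
  simpa using hfα0

end TrivLayer

/-- every element of `π₁ˢᵍ(X,x)` acts trivially on the fiber `p⁻¹(x)` under the
monodromy action: the lift of any representing loop starting at any point of the fiber is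
closed. -/
theorem sgSubgroup_acts_trivially_on_fiber {E X : Type*} [TopologicalSpace E]
    [TopologicalSpace X] (p : C(E, X)) (hp : IsCoveringMap p) (x : X)
    (γ : FundamentalGroup X x) (hγ : γ ∈ sgSubgroup X x)
    (σ : Path x x) (hσ : fromLoop ⟦σ⟧ = γ)
    (xt : E) (hxt : p xt = x)
    (sigt : C(unitInterval, E)) (hlift : ∀ t, p (sigt t) = σ t) (h0 : sigt 0 = xt) :
    sigt 1 = xt := by
  have key : TrivAction p x γ := by
    refine Subgroup.closure_induction ?_ ?_ ?_ ?_ hγ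
    · rintro g ⟨y, α, β, hβ, rfl⟩
      exact trivAction_gen hp α β hβ
    · exact trivAction_one hp x
    · intro a b _ _ ha hb
      exact trivAction_mul hp ha hb
    · intro a _ ha
      exact trivAction_inv hp ha
  have hσq : (⟦σ⟧ : Path.Homotopic.Quotient x x) = toLoop γ := loop_eq_toLoop hσ
  have hmain := key σ hσq xt hxt (fun t => sigt (Set.projIcc 0 1 zero_le_one t))
    (sigt.continuous.comp continuous_projIcc)
    (fun t _ => hlift _)
    (by show sigt (Set.projIcc 0 1 zero_le_one 0) = xt
        rw [Set.projIcc_left]; exact h0)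
  have hmain' : sigt (Set.projIcc 0 1 zero_le_one 1) = xt := hmain
  rw [Set.projIcc_right] at hmain'
  exact hmain'

end
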